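/- For i ≥ 1, define φ_{-i} ∈ K[h] by φ_{-i} = (h+i-1)·∏_{j=m-i+1}^{m}(h-j) if 1 ≤ i ≤ m-1, and φ_{-i} = (h+i-1)·∏_{j=m-i+1, j≠1}^{m}(h-j) if i ≥ m. Then the operator δ_{-i} = φ_{-i}(h)x^{-i} maps A(m) into A(m), and a polynomial f ∈ K[h] has f(h)x^{-i} mapping A(m) into A(m) if and only if φ_{-i} divides f. -/

import Mathlib

open Polynomial LaurentPolynomial

/-- The operator `f(h)x^a` of the skew Laurent ring `K[h][x,x⁻¹;σ]`, `σ(h) = h-1`,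
acting on `K[x,x⁻¹]` by `(f(h)x^a) ∗ x^j = f(a+j+1) x^{a+j}`
(so that `h ∗ x^j = (j+1) x^j` and `x^{±1} ∗ x^j = x^{j±1}`). -/
noncomputable def op (K : Type*) [Field K] (f : Polynomial K) (a : ℤ) :
    LaurentPolynomial K →ₗ[K] LaurentPolynomial K :=
  (Finsupp.lsum K fun j : ℤ =>
    f.eval ((a + j + 1 : ℤ) : K) •
      LinearMap.toSpanSingleton K (LaurentPolynomial K) (LaurentPolynomial.T (a + j))) ∘ₗ
    (AddMonoidAlgebra.coeffLinearEquiv K).toLinearMap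

/-- `A(m) = K + Σ_{i ≥ m} K x^i`, as a subspace of `K[x,x⁻¹]`. -/
noncomputable def Am (K : Type*) [Field K] (m : ℕ) : Submodule K (LaurentPolynomial K) :=
  Submodule.span K {p : LaurentPolynomial K | ∃ i : ℤ, (i = 0 ∨ (m : ℤ) ≤ i) ∧ p = T i}

/-- `φ_{-i} = (h+i-1)·∏_{j=m-i+1}^{m} (h-j)` where the factor `h-1` is omitted
(the condition `j ≠ 1` only matters when `i ≥ m`; for `1 ≤ i ≤ m-1` the range
`m-i+1 ≤ j ≤ m` consists of integers `≥ 2`, so the filter removes nothing). -/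
noncomputable def phi (K : Type*) [Field K] (m i : ℕ) : Polynomial K :=
  (X + Polynomial.C ((i : K) - 1)) *
    ∏ j ∈ (Finset.Icc ((m : ℤ) - i + 1) (m : ℤ)).filter (· ≠ 1),
      (X - Polynomial.C ((j : ℤ) : K))

lemma op_T (K : Type*) [Field K] (f : Polynomial K) (a j : ℤ) :
    op K f a (T j) = f.eval ((a + j + 1 : ℤ) : K) • T (a + j) := by
  show (Finsupp.lsum K fun j' : ℤ => f.eval ((a + j' + 1 : ℤ) : K) •
      LinearMap.toSpanSingleton K (LaurentPolynomial K) (T (a + j'))) (Finsupp.single j 1) = _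
  rw [Finsupp.lsum_single]
  simp

lemma coeff_zero_of_mem_Am (K : Type*) [Field K] (m : ℕ) (j : ℤ) (p : LaurentPolynomial K)
    (h : p ∈ Am K m) (hj : ¬ (j = 0 ∨ (m : ℤ) ≤ j)) : AddMonoidAlgebra.coeff p j = 0 := by
  induction h using Submodule.span_induction with
  | mem p hp =>
      obtain ⟨k, hk, rfl⟩ := hp
      show Finsupp.single k (1 : K) j = 0
      rw [Finsupp.single_apply]
      split
      · next hkj => exact absurd (hkj ▸ hk) hj
      · rfl
  | zero => rfl
  | add _ _ _ _ h1 h2 => show AddMonoidAlgebra.coeff (_ + _ : LaurentPolynomial K) j = 0; rw [AddMonoidAlgebra.coeff_add, Finsupp.add_apply, h1, h2, add_zero]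
  | smul c _ _ h => show AddMonoidAlgebra.coeff (c • _ : LaurentPolynomial K) j = 0; rw [AddMonoidAlgebra.coeff_smul_apply, h, smul_zero]

lemma T_mem_Am_iff (K : Type*) [Field K] (m : ℕ) (j : ℤ) :
    T j ∈ Am K m ↔ (j = 0 ∨ (m : ℤ) ≤ j) := by
  constructor
  · intro h
    by_contra hj
    have := coeff_zero_of_mem_Am K m j (T j) h hj
    rw [show AddMonoidAlgebra.coeff (T j : LaurentPolynomial K) j = 1 from Finsupp.single_eq_same] at this
    exact one_ne_zero this
  · intro h
    exact Submodule.subset_span ⟨j, h, rfl⟩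

lemma smul_T_mem_Am_iff (K : Type*) [Field K] (m : ℕ) (c : K) (j : ℤ) :
    c • (T j : LaurentPolynomial K) ∈ Am K m ↔ (c = 0 ∨ (j = 0 ∨ (m : ℤ) ≤ j)) := by
  constructor
  · intro h
    by_cases hc : c = 0
    · exact Or.inl hc
    · right
      rw [← T_mem_Am_iff K m j]
      have := Submodule.smul_mem (Am K m) c⁻¹ h
      rwa [smul_smul, inv_mul_cancel₀ hc, one_smul] at this
  · rintro (rfl | h)
    · rw [zero_smul]; exact Submodule.zero_mem _
    · exact Submodule.smul_mem _ _ ((T_mem_Am_iff K m j).2 h)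

lemma map_Am_iff (K : Type*) [Field K] (m : ℕ) (f : Polynomial K) (i : ℕ) :
    Submodule.map (op K f (-(i : ℤ))) (Am K m) ≤ Am K m ↔
      ∀ j : ℤ, (j = 0 ∨ (m : ℤ) ≤ j) →
        (j - i = 0 ∨ (m : ℤ) ≤ j - i) ∨ f.eval ((j - i + 1 : ℤ) : K) = 0 := by
  constructor
  · intro H j hj
    have hmem : op K f (-(i : ℤ)) (T j) ∈ Am K m :=
      H ⟨T j, Submodule.subset_span ⟨j, hj, rfl⟩, rfl⟩
    rw [op_T] at hmem
    rw [smul_T_mem_Am_iff] at hmem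
    rcases hmem with hc | hk
    · right; rw [show (j - i + 1 : ℤ) = -(i : ℤ) + j + 1 by ring]; exact hc
    · left; rw [show (j - i : ℤ) = -(i : ℤ) + j by ring]; exact hk
  · intro H
    rw [Submodule.map_le_iff_le_comap, Am, Submodule.span_le]
    rintro p ⟨j, hj, rfl⟩
    simp only [SetLike.mem_coe, Submodule.mem_comap]
    rw [op_T]
    refine (smul_T_mem_Am_iff K m _ _).2 ?_
    rcases H j hj with hk | hc
    · exact Or.inr (by rw [show (-(i : ℤ) + j : ℤ) = j - i by ring]; exact hk)
    · exact Or.inl (by rw [show (-(i : ℤ) + j + 1 : ℤ) = j - i + 1 by ring]; exact hc)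

lemma prod_linear_dvd {K : Type*} [Field K] (t : Finset K) (f : Polynomial K) :
    (∏ r ∈ t, (X - Polynomial.C r)) ∣ f ↔ ∀ r ∈ t, f.eval r = 0 := by
  classical
  induction t using Finset.induction with
  | empty => simp
  | @insert a s ha ih =>
      rw [Finset.prod_insert ha]
      constructor
      · intro hd r hr
        rcases Finset.mem_insert.1 hr with rfl | hr
        · have : (X - Polynomial.C r) ∣ f := (dvd_mul_right _ _).trans hd
          exact (dvd_iff_isRoot).1 this
        · exact ih.1 ((dvd_mul_left _ _).trans hd) r hr
      · intro h
        have h1 : (X - Polynomial.C a) ∣ f :=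
          (dvd_iff_isRoot).2 (h a (Finset.mem_insert_self _ _))
        have h2 : (∏ r ∈ s, (X - Polynomial.C r)) ∣ f :=
          ih.2 fun r hr => h r (Finset.mem_insert_of_mem hr)
        have hc : IsCoprime (X - Polynomial.C a) (∏ r ∈ s, (X - Polynomial.C r)) :=
          IsCoprime.prod_right fun r hr =>
            isCoprime_X_sub_C_of_isUnit_sub
              ((sub_ne_zero_of_ne (fun e => ha (by rwa [e]))).isUnit)
        exact hc.mul_dvd h1 h2

lemma phi_dvd_iff (K : Type*) [Field K] [CharZero K] (m : ℕ) (hm : 2 ≤ m)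
    (i : ℕ) (h1 : 1 ≤ i) (f : Polynomial K) :
    phi K m i ∣ f ↔
      f.eval (((1 : ℤ) - i : ℤ) : K) = 0 ∧
        ∀ k ∈ (Finset.Icc ((m : ℤ) - i + 1) (m : ℤ)).filter (· ≠ 1),
          f.eval ((k : ℤ) : K) = 0 := by
  classical
  set s : Finset ℤ := (Finset.Icc ((m : ℤ) - i + 1) (m : ℤ)).filter (· ≠ 1) with hs
  set t : Finset K := s.image (fun k : ℤ => (k : K)) with ht
  have hInj : Set.InjOn (fun k : ℤ => (k : K)) s := fun a _ b _ h => Int.cast_injective h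
  have hc0 : (((1 : ℤ) - i : ℤ) : K) ∉ t := by
    rw [ht, Finset.mem_image]
    rintro ⟨k, hk, he⟩
    have := Int.cast_injective he
    rw [hs, Finset.mem_filter, Finset.mem_Icc] at hk
    omega
  have hphi : phi K m i = ∏ r ∈ insert (((1 : ℤ) - i : ℤ) : K) t, (X - Polynomial.C r) := by
    rw [Finset.prod_insert hc0, phi, ht, Finset.prod_image hInj]
    congr 1
    rw [show ((i : K) - 1) = -(((1 : ℤ) - i : ℤ) : K) by push_cast; ring, map_neg]; rw [
      ← sub_eq_add_neg]
  rw [hphi, prod_linear_dvd]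
  constructor
  · intro h
    refine ⟨h _ (Finset.mem_insert_self _ _), fun k hk => h _ (Finset.mem_insert_of_mem ?_)⟩
    exact Finset.mem_image_of_mem _ hk
  · rintro ⟨h0, h⟩ r hr
    rcases Finset.mem_insert.1 hr with rfl | hr
    · exact h0
    · obtain ⟨k, hk, rfl⟩ := Finset.mem_image.1 hr
      exact h k hk

theorem stmt4 (K : Type*) [Field K] [CharZero K] (m : ℕ) (hm : 2 ≤ m)
    (i : ℕ) (h1 : 1 ≤ i) :
    Submodule.map (op K (phi K m i) (-(i : ℤ))) (Am K m) ≤ Am K m ∧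
      ∀ f : Polynomial K,
        (Submodule.map (op K f (-(i : ℤ))) (Am K m) ≤ Am K m ↔ phi K m i ∣ f) := by
  have key : ∀ f : Polynomial K,
      Submodule.map (op K f (-(i : ℤ))) (Am K m) ≤ Am K m ↔ phi K m i ∣ f := by
    intro f
    rw [map_Am_iff, phi_dvd_iff K m hm i h1]
    constructor
    · intro H
      constructor
      · have := H 0 (Or.inl rfl)
        rcases this with hk | hc
        · omega
        · rw [show ((1 : ℤ) - i : ℤ) = (0 : ℤ) - i + 1 by ring]; exact hc
      · intro k hk
        rw [Finset.mem_filter, Finset.mem_Icc] at hk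
        have := H (k + i - 1) (Or.inr (by omega))
        rcases this with hj | hc
        · omega
        · rw [show (k : ℤ) = (k + i - 1 : ℤ) - i + 1 by ring]; exact hc
    · rintro ⟨h0, h⟩ j hj
      by_cases hk : (j - i = 0 ∨ (m : ℤ) ≤ j - i)
      · exact Or.inl hk
      · right
        push_neg at hk
        rcases hj with rfl | hj
        · rw [show ((0 : ℤ) - i + 1 : ℤ) = (1 : ℤ) - i by ring]; exact h0
        · refine h (j - i + 1) ?_
          rw [Finset.mem_filter, Finset.mem_Icc]
          constructor
          · omega
          · show (j - i + 1 : ℤ) ≠ 1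
            omega
  exact ⟨(key _).2 dvd_rfl, key⟩
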